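/- No invertible real 4×4 matrix A = SS', with S and S' symmetric of Lorentzian signature (−,+,+,+), is similar to the Jordan matrix consisting of two 2×2 Jordan blocks with the same eigenvalue −u (u > 0), i.e., J₅ = diag(J₂(−u), J₂(−u)) where J₂(−u) = [[−u,1],[0,−u]]. -/

import Mathlib

open Matrix

private lemma sq3_zero {a b c : ℝ} (h : a * a + b * b + c * c = 0) :
    a = 0 ∧ b = 0 ∧ c = 0 := by
  refine ⟨?_, ?_, ?_⟩ <;> nlinarith [sq_nonneg a, sq_nonneg b, sq_nonneg c]

private lemma aux19 (Q : Matrix (Fin 4) (Fin 4) ℝ) (hQ : IsUnit Q.det)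
    (h1 : -(Q 0 0 * Q 0 0) + Q 1 0 * Q 1 0 + Q 2 0 * Q 2 0 + Q 3 0 * Q 3 0 = 0)
    (h2 : -(Q 0 0 * Q 0 2) + Q 1 0 * Q 1 2 + Q 2 0 * Q 2 2 + Q 3 0 * Q 3 2 = 0)
    (h3 : -(Q 0 2 * Q 0 2) + Q 1 2 * Q 1 2 + Q 2 2 * Q 2 2 + Q 3 2 * Q 3 2 = 0) :
    False := by
  have hzero : ∀ v : Fin 4 → ℝ, Q *ᵥ v = 0 → v = 0 := by
    intro v hv
    have h := congrArg (fun w => Q⁻¹ *ᵥ w) hv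
    simpa [Matrix.mulVec_mulVec, Matrix.nonsing_inv_mul Q hQ] using h
  have hc : (Q 0 0 * Q 1 2 - Q 0 2 * Q 1 0) * (Q 0 0 * Q 1 2 - Q 0 2 * Q 1 0)
      + (Q 0 0 * Q 2 2 - Q 0 2 * Q 2 0) * (Q 0 0 * Q 2 2 - Q 0 2 * Q 2 0)
      + (Q 0 0 * Q 3 2 - Q 0 2 * Q 3 0) * (Q 0 0 * Q 3 2 - Q 0 2 * Q 3 0) = 0 := by
    linear_combination (Q 0 2 * Q 0 2) * h1 - 2 * (Q 0 0 * Q 0 2) * h2 + (Q 0 0 * Q 0 0) * h3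
  obtain ⟨c1, c2, c3⟩ := sq3_zero hc
  have hv0 : Q *ᵥ ![Q 0 2, 0, -(Q 0 0), 0] = 0 := by
    funext i
    fin_cases i <;>
      simp [Matrix.mulVec, dotProduct, Fin.sum_univ_four] <;>
      [skip; linear_combination -c1; linear_combination -c2; linear_combination -c3] <;>
      ring
  have hv := hzero _ hv0
  have ha0 : Q 0 0 = 0 := by
    have := congrFun hv 2
    simpa using this
  have hb0 : Q 0 2 = 0 := by
    have := congrFun hv 0
    simpa using this
  have hsum : Q 1 0 * Q 1 0 + Q 2 0 * Q 2 0 + Q 3 0 * Q 3 0 = 0 := by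
    linear_combination h1 + Q 0 0 * ha0
  obtain ⟨q1, q2, q3⟩ := sq3_zero hsum
  have he : Q *ᵥ ![1, 0, 0, 0] = 0 := by
    funext i
    fin_cases i <;> simp [Matrix.mulVec, dotProduct, Fin.sum_univ_four, ha0, q1, q2, q3]
  have := congrFun (hzero _ he) 0
  norm_num at this

theorem stmt_19 (u : ℝ) (hu : 0 < u)
    (S S' P : Matrix (Fin 4) (Fin 4) ℝ)
    (hS : Sᵀ = S) (hSinv : IsUnit S.det)
    (hS' : S'ᵀ = S') (hS'inv : IsUnit S'.det)
    (hSsig : ∃ U : Matrix (Fin 4) (Fin 4) ℝ, IsUnit U.det ∧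
      S = Uᵀ * Matrix.diagonal ![(-1 : ℝ), 1, 1, 1] * U)
    (hS'sig : ∃ V : Matrix (Fin 4) (Fin 4) ℝ, IsUnit V.det ∧
      S' = Vᵀ * Matrix.diagonal ![(-1 : ℝ), 1, 1, 1] * V)
    (hP : IsUnit P.det) :
    S * S' ≠ P⁻¹ * !![-u, 1, 0, 0; 0, -u, 0, 0; 0, 0, -u, 1; 0, 0, 0, -u] * P := by
  intro h
  obtain ⟨V, hV, hSV⟩ := hS'sig
  set J : Matrix (Fin 4) (Fin 4) ℝ := !![-u, 1, 0, 0; 0, -u, 0, 0; 0, 0, -u, 1; 0, 0, 0, -u]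
    with hJdef
  have hD : Matrix.diagonal ![(-1 : ℝ), 1, 1, 1]
      = !![(-1:ℝ),0,0,0;0,1,0,0;0,0,1,0;0,0,0,1] := by
    ext i j
    fin_cases i <;> fin_cases j <;>
      simp [Matrix.diagonal, Matrix.vecHead, Matrix.vecTail]
  set D : Matrix (Fin 4) (Fin 4) ℝ := !![(-1:ℝ),0,0,0;0,1,0,0;0,0,1,0;0,0,0,1] with hDdef
  rw [hD] at hSV
  have hPP : P * P⁻¹ = 1 := Matrix.mul_nonsing_inv P hP
  have hPtP : P⁻¹ᵀ * Pᵀ = 1 := by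
    rw [← Matrix.transpose_mul, hPP, Matrix.transpose_one]
  have cP : ∀ X : Matrix (Fin 4) (Fin 4) ℝ, P⁻¹ᵀ * (Pᵀ * X) = X := fun X => by
    rw [← Matrix.mul_assoc, hPtP, Matrix.one_mul]
  have hsel : (S' * (P⁻¹ * J * P))ᵀ = S' * (P⁻¹ * J * P) := by
    rw [← h]
    calc (S' * (S * S'))ᵀ = S'ᵀ * Sᵀ * S'ᵀ := by
          simp [Matrix.transpose_mul, Matrix.mul_assoc]
      _ = S' * (S * S') := by rw [hS, hS', Matrix.mul_assoc]
  have hKJ : Jᵀ * (P⁻¹ᵀ * (S' * P⁻¹)) = P⁻¹ᵀ * (S' * (P⁻¹ * J)) := by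
    have h2 := congrArg (fun M => P⁻¹ᵀ * M * P⁻¹) hsel
    simpa only [Matrix.transpose_mul, hS', Matrix.mul_assoc, cP, hPP, Matrix.mul_one] using h2
  set Q : Matrix (Fin 4) (Fin 4) ℝ := V * P⁻¹ with hQdef
  have hK : P⁻¹ᵀ * (S' * P⁻¹) = Qᵀ * (D * Q) := by
    rw [hQdef, hSV]
    simp only [Matrix.transpose_mul, Matrix.mul_assoc]
  have hKJ' : Jᵀ * (Qᵀ * (D * Q)) = Qᵀ * (D * Q) * J := by
    rw [← hK, hKJ, Matrix.mul_assoc, Matrix.mul_assoc]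
  have hQ : IsUnit Q.det := by
    rw [hQdef, Matrix.det_mul]
    exact hV.mul (Matrix.isUnit_nonsing_inv_det P hP)
  have e1 : (Jᵀ * (Qᵀ * (D * Q))) 0 1 = (Qᵀ * (D * Q) * J) 0 1 := by rw [hKJ']
  have e2 : (Jᵀ * (Qᵀ * (D * Q))) 0 3 = (Qᵀ * (D * Q) * J) 0 3 := by rw [hKJ']
  have e3 : (Jᵀ * (Qᵀ * (D * Q))) 2 3 = (Qᵀ * (D * Q) * J) 2 3 := by rw [hKJ']
  simp only [hJdef, hDdef, Matrix.mul_apply, Matrix.transpose_apply, Fin.sum_univ_four] at e1 e2 e3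
  simp only [Matrix.of_apply, Matrix.cons_val', Matrix.cons_val_zero, Matrix.cons_val_one, Matrix.cons_val_two, Matrix.cons_val_three, Matrix.empty_val', Matrix.cons_val_fin_one, Matrix.head_cons, Matrix.tail_cons, Matrix.head_fin_const] at e1 e2 e3
  norm_num at e1 e2 e3
  exact aux19 Q hQ (by linear_combination -e1) (by linear_combination -e2)
    (by linear_combination -e3)
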